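/- Let C ≥ 1 and α_i, β_i > 0 for i = 1,…,C, and for each i let f_i = f_{α_i,β_i} be the Beta(α_i,β_i) density with mean m_i = α_i/(α_i+β_i). Then the marginalized joint entropy satisfies −∑_{i=1}^{C} ∫₀¹ p·f_i(p)·log(p·f_i(p)) dp = ∑_{i=1}^{C} (α_i/(α_i+β_i)) · [ log B(α_i+1,β_i) − α_i·ψ(α_i+1) − (β_i−1)·ψ(β_i) + (α_i+β_i−1)·ψ(α_i+β_i+1) − log(α_i/(α_i+β_i)) ], where ψ is the digamma function and B(α,β) = Γ(α)Γ(β)/Γ(α+β). -/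

import Mathlib

open Real MeasureTheory

/-- The Beta function `B(α,β) = Γ(α)Γ(β)/Γ(α+β)`. -/
noncomputable def betaB (α β : ℝ) : ℝ := Gamma α * Gamma β / Gamma (α + β)

/-- The density of the `Beta(α,β)` distribution on `[0,1]`. -/
noncomputable def betaDensity (α β : ℝ) (p : ℝ) : ℝ :=
  p ^ (α - 1) * (1 - p) ^ (β - 1) / betaB α β

/-- The digamma function `ψ`, the derivative of `log Γ`. -/
noncomputable def digamma (x : ℝ) : ℝ := deriv (fun y : ℝ => Real.log (Gamma y)) x

section Aux
open Set

lemma ofReal_integrand {a b : ℝ} {x : ℝ} (hx : x ∈ Ioo (0:ℝ) 1) :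
    ((x ^ (a-1) * (1-x) ^ (b-1) : ℝ) : ℂ) = (x:ℂ) ^ ((a:ℂ)-1) * ((1:ℂ)-x) ^ ((b:ℂ)-1) := by
  rw [Complex.ofReal_mul, Complex.ofReal_cpow hx.1.le, Complex.ofReal_cpow (by linarith [hx.2] : (0:ℝ) ≤ 1 - x)]
  push_cast
  ring_nf

lemma beta_integrableOn {a b : ℝ} (ha : 0 < a) (hb : 0 < b) :
    IntegrableOn (fun p : ℝ => p ^ (a-1) * (1-p) ^ (b-1)) (Ioo 0 1) := by
  have h := (Complex.betaIntegral_convergent (u := (a:ℂ)) (v := (b:ℂ)) (by simpa) (by simpa))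
  rw [intervalIntegrable_iff_integrableOn_Ioc_of_le zero_le_one] at h
  have h2 : IntegrableOn (fun x : ℝ => (x:ℂ) ^ ((a:ℂ)-1) * ((1:ℂ)-x) ^ ((b:ℂ)-1)) (Ioo 0 1) :=
    h.mono_set Ioo_subset_Ioc_self
  have h3 := h2.norm
  apply h3.congr (Filter.eventuallyEq_of_mem (self_mem_ae_restrict measurableSet_Ioo) ?_)
  intro x hx
  dsimp only
  rw [← ofReal_integrand hx, Complex.norm_real, Real.norm_of_nonneg]
  exact mul_nonneg (rpow_nonneg hx.1.le _) (rpow_nonneg (by linarith [hx.2]) _)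

lemma real_betaIntegral {a b : ℝ} (ha : 0 < a) (hb : 0 < b) :
    ∫ p in Ioo (0:ℝ) 1, p ^ (a-1) * (1-p) ^ (b-1) = betaB a b := by
  have hab : (0:ℝ) < a + b := by linarith
  have h := Complex.Gamma_mul_Gamma_eq_betaIntegral (s := (a:ℂ)) (t := (b:ℂ)) (by simpa) (by simpa)
  have hG : Complex.Gamma ((a:ℂ) + b) ≠ 0 := by
    rw [show ((a:ℂ)+b) = ((a+b:ℝ):ℂ) by push_cast; ring, Complex.Gamma_ofReal]
    exact_mod_cast (Real.Gamma_pos_of_pos hab).ne'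
  have hbi : Complex.betaIntegral a b = ((betaB a b : ℝ) : ℂ) := by
    rw [betaB]
    push_cast
    rw [← Complex.Gamma_ofReal, ← Complex.Gamma_ofReal, ← Complex.Gamma_ofReal]
    push_cast
    rw [eq_div_iff hG]
    linear_combination -h
  have hio : Complex.betaIntegral a b
      = ∫ x in Ioo (0:ℝ) 1, ((x ^ (a-1) * (1-x) ^ (b-1) : ℝ) : ℂ) := by
    rw [Complex.betaIntegral, intervalIntegral.integral_of_le zero_le_one,
      integral_Ioc_eq_integral_Ioo]
    exact setIntegral_congr_fun measurableSet_Ioo fun x hx => (ofReal_integrand hx).symm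
  rw [hio] at hbi
  have h2 : ((∫ x in Ioo (0:ℝ) 1, x ^ (a-1) * (1-x) ^ (b-1) : ℝ) : ℂ) = ((betaB a b : ℝ) : ℂ) := by
    rw [← hbi]
    exact (integral_ofReal (𝕜 := ℂ)).symm
  exact_mod_cast h2

lemma abs_log_le {p δ : ℝ} (hp : 0 < p) (hp1 : p ≤ 1) (hδ : 0 < δ) :
    |log p| ≤ δ⁻¹ * p ^ (-δ) := by
  have h1 : log p * -δ ≤ p ^ (-δ) := by
    rw [rpow_def_of_pos hp]
    linarith [Real.add_one_le_exp (log p * -δ)]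
  have h2 : δ⁻¹ * (log p * -δ) ≤ δ⁻¹ * p ^ (-δ) :=
    mul_le_mul_of_nonneg_left h1 (by positivity)
  rw [abs_of_nonpos (log_nonpos hp.le hp1)]
  calc -log p = δ⁻¹ * (log p * -δ) := by field_simp
  _ ≤ _ := h2

lemma beta_log_integrableOn {c b : ℝ} (hc : 0 < c) (hb : 0 < b) :
    IntegrableOn (fun p : ℝ => p ^ (c-1) * (1-p) ^ (b-1) * |log p|) (Ioo 0 1) := by
  have h := (beta_integrableOn (show 0 < c/2 by linarith) hb).const_mul (c/2)⁻¹
  apply h.mono' ?_ ?_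
  · apply Measurable.aestronglyMeasurable
    exact (by fun_prop : Measurable fun p : ℝ => p ^ (c-1) * (1-p) ^ (b-1)).mul
      Real.measurable_log.abs
  · filter_upwards [self_mem_ae_restrict measurableSet_Ioo] with p hp
    have hp0 := hp.1
    have hp1 : (0:ℝ) ≤ 1 - p := by linarith [hp.2]
    have hnn : (0:ℝ) ≤ p ^ (c-1) * (1-p) ^ (b-1) * |log p| :=
      mul_nonneg (mul_nonneg (rpow_nonneg hp0.le _) (rpow_nonneg hp1 _)) (abs_nonneg _)
    rw [Real.norm_of_nonneg hnn]
    have hlog := abs_log_le hp0 hp.2.le (show (0:ℝ) < c/2 by linarith)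
    calc p ^ (c-1) * (1-p) ^ (b-1) * |log p|
        ≤ p ^ (c-1) * (1-p) ^ (b-1) * ((c/2)⁻¹ * p ^ (-(c/2))) := by
          apply mul_le_mul_of_nonneg_left hlog
          exact mul_nonneg (rpow_nonneg hp0.le _) (rpow_nonneg hp1 _)
    _ = (c/2)⁻¹ * (p ^ (c/2-1) * (1-p) ^ (b-1)) := by
          rw [show c/2 - 1 = (c-1) + -(c/2) by ring, rpow_add hp0]
          ring

lemma hasDerivAt_betaInt {a b : ℝ} (ha : 0 < a) (hb : 0 < b) :
    HasDerivAt (fun s : ℝ => ∫ p in Ioo (0:ℝ) 1, p ^ (s-1) * (1-p) ^ (b-1))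
      (∫ p in Ioo (0:ℝ) 1, p ^ (a-1) * (1-p) ^ (b-1) * log p) a := by
  have hε0 : 0 < a/2 := by positivity
  have key := hasDerivAt_integral_of_dominated_loc_of_deriv_le
    (μ := volume.restrict (Ioo (0:ℝ) 1))
    (F := fun s p => p ^ (s-1) * (1-p) ^ (b-1))
    (F' := fun s p => p ^ (s-1) * (1-p) ^ (b-1) * log p)
    (x₀ := a) (bound := fun p => p ^ (a/2-1) * (1-p) ^ (b-1) * |log p|) (Metric.ball_mem_nhds a hε0)
    ?_ ?_ ?_ ?_ ?_ ?_
  · exact key.2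
  · exact Filter.Eventually.of_forall fun s =>
      (by fun_prop : Measurable fun p : ℝ => p ^ (s-1) * (1-p) ^ (b-1)).aestronglyMeasurable
  · exact beta_integrableOn ha hb
  · exact ((by fun_prop : Measurable fun p : ℝ => p ^ (a-1) * (1-p) ^ (b-1)).mul
      Real.measurable_log).aestronglyMeasurable
  · filter_upwards [self_mem_ae_restrict measurableSet_Ioo] with p hp s hs
    have hp0 := hp.1
    have hp1 : (0:ℝ) ≤ 1 - p := by linarith [hp.2]
    have hs2 : a/2 - 1 ≤ s - 1 := by
      rw [Metric.mem_ball, Real.dist_eq, abs_lt] at hs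
      linarith [hs.1]
    have h1 : p ^ (s-1) ≤ p ^ (a/2-1) :=
      Real.rpow_le_rpow_of_exponent_ge hp0 hp.2.le hs2
    have : ‖p ^ (s-1) * (1-p) ^ (b-1) * log p‖
        = p ^ (s-1) * (1-p) ^ (b-1) * |log p| := by
      rw [norm_mul, Real.norm_of_nonneg (mul_nonneg (rpow_nonneg hp0.le _) (rpow_nonneg hp1 _))]
      rfl
    rw [this]
    have hb1 : (0:ℝ) ≤ (1-p) ^ (b-1) := rpow_nonneg hp1 _
    nlinarith [abs_nonneg (log p), mul_nonneg hb1 (abs_nonneg (log p)),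
      mul_le_mul_of_nonneg_right h1 (mul_nonneg hb1 (abs_nonneg (log p)))]
  · exact beta_log_integrableOn hε0 hb
  · filter_upwards [self_mem_ae_restrict measurableSet_Ioo] with p hp s _
    have hd : HasDerivAt (fun s : ℝ => p ^ (s-1)) (p ^ (s-1) * log p) s := by
      have h := (Real.hasStrictDerivAt_const_rpow hp.1 (s-1)).hasDerivAt
      have h2 := h.comp s ((hasDerivAt_id s).sub_const 1)
      simp at h2
      exact h2
    have := hd.mul_const ((1-p) ^ (b-1))
    refine this.congr_deriv ?_
    ring

lemma Gamma_ne_zero_of_pos {x : ℝ} (hx : 0 < x) : Gamma x ≠ 0 :=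
  (Real.Gamma_pos_of_pos hx).ne'

lemma deriv_Gamma_pos {x : ℝ} (hx : 0 < x) : deriv Gamma x = digamma x * Gamma x := by
  have hne : ∀ m : ℕ, x ≠ -↑m := fun m => ((neg_nonpos.mpr m.cast_nonneg).trans_lt hx).ne'
  have hd := Real.differentiableAt_Gamma hne
  have hG := Gamma_ne_zero_of_pos hx
  have h : digamma x = deriv Gamma x / Gamma x := by
    rw [digamma, deriv.log hd hG]
  rw [h, div_mul_cancel₀ _ hG]

lemma hasDerivAt_betaB {a b : ℝ} (ha : 0 < a) (hb : 0 < b) :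
    HasDerivAt (fun s : ℝ => betaB s b) (betaB a b * (digamma a - digamma (a+b))) a := by
  have hab : 0 < a + b := by linarith
  have hne : ∀ m : ℕ, a ≠ -↑m := fun m => ((neg_nonpos.mpr m.cast_nonneg).trans_lt ha).ne'
  have hne2 : ∀ m : ℕ, a + b ≠ -↑m := fun m => ((neg_nonpos.mpr m.cast_nonneg).trans_lt hab).ne'
  have h1 : HasDerivAt Gamma (digamma a * Gamma a) a := by
    have := (Real.differentiableAt_Gamma hne).hasDerivAt
    rwa [deriv_Gamma_pos ha] at this
  have h2 : HasDerivAt (fun s : ℝ => Gamma (s+b)) (digamma (a+b) * Gamma (a+b)) a := by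
    have h0 := (Real.differentiableAt_Gamma hne2).hasDerivAt
    rw [deriv_Gamma_pos hab] at h0
    have := h0.comp a ((hasDerivAt_id a).add_const b)
    simp at this
    exact this
  have h3 := (h1.mul_const (Gamma b)).div h2 (Gamma_ne_zero_of_pos hab)
  refine h3.congr_deriv ?_
  have hGa := Gamma_ne_zero_of_pos ha
  have hGb := Gamma_ne_zero_of_pos hb
  have hGab := Gamma_ne_zero_of_pos hab
  unfold betaB
  field_simp

lemma betaInt_log_left {a b : ℝ} (ha : 0 < a) (hb : 0 < b) :
    ∫ p in Ioo (0:ℝ) 1, p ^ (a-1) * (1-p) ^ (b-1) * log p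
      = betaB a b * (digamma a - digamma (a+b)) := by
  have h1 := hasDerivAt_betaInt ha hb
  have h2 : HasDerivAt (fun s : ℝ => ∫ p in Ioo (0:ℝ) 1, p ^ (s-1) * (1-p) ^ (b-1))
      (betaB a b * (digamma a - digamma (a+b))) a := by
    apply (hasDerivAt_betaB ha hb).congr_of_eventuallyEq
    filter_upwards [eventually_gt_nhds ha] with s hs
    exact real_betaIntegral hs hb
  exact h1.unique h2

lemma integral_Ioo_comp_sub (f : ℝ → ℝ) :
    ∫ p in Ioo (0:ℝ) 1, f (1-p) = ∫ p in Ioo (0:ℝ) 1, f p := by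
  rw [← integral_Ioc_eq_integral_Ioo, ← integral_Ioc_eq_integral_Ioo,
    ← intervalIntegral.integral_of_le zero_le_one, ← intervalIntegral.integral_of_le zero_le_one,
    intervalIntegral.integral_comp_sub_left f 1]
  norm_num

lemma betaInt_log_right {a b : ℝ} (ha : 0 < a) (hb : 0 < b) :
    ∫ p in Ioo (0:ℝ) 1, p ^ (a-1) * (1-p) ^ (b-1) * log (1-p)
      = betaB a b * (digamma b - digamma (a+b)) := by
  have h := integral_Ioo_comp_sub (fun q : ℝ => q ^ (b-1) * (1-q) ^ (a-1) * log q)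
  have heq : ∀ p : ℝ, (1-p) ^ (b-1) * (1-(1-p)) ^ (a-1) * log (1-p)
      = p ^ (a-1) * (1-p) ^ (b-1) * log (1-p) := by
    intro p; ring_nf
  simp only [heq] at h
  rw [h, betaInt_log_left hb ha]
  rw [show b + a = a + b by ring, show betaB b a = betaB a b by
    unfold betaB; rw [show b + a = a + b by ring]; ring]

lemma beta_log1_integrableOn {c b : ℝ} (hc : 0 < c) (hb : 0 < b) :
    IntegrableOn (fun p : ℝ => p ^ (c-1) * (1-p) ^ (b-1) * |log (1-p)|) (Ioo 0 1) := by
  have h := (beta_integrableOn hc (show 0 < b/2 by linarith)).const_mul (b/2)⁻¹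
  apply h.mono' ?_ ?_
  · apply Measurable.aestronglyMeasurable
    exact (by fun_prop : Measurable fun p : ℝ => p ^ (c-1) * (1-p) ^ (b-1)).mul
      ((Real.measurable_log.comp (measurable_const.sub measurable_id)).abs)
  · filter_upwards [self_mem_ae_restrict measurableSet_Ioo] with p hp
    have hp0 := hp.1
    have hp1 : (0:ℝ) < 1 - p := by linarith [hp.2]
    have hnn : (0:ℝ) ≤ p ^ (c-1) * (1-p) ^ (b-1) * |log (1-p)| :=
      mul_nonneg (mul_nonneg (rpow_nonneg hp0.le _) (rpow_nonneg hp1.le _)) (abs_nonneg _)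
    rw [Real.norm_of_nonneg hnn]
    have hlog := abs_log_le hp1 (by linarith) (show (0:ℝ) < b/2 by linarith)
    calc p ^ (c-1) * (1-p) ^ (b-1) * |log (1-p)|
        ≤ p ^ (c-1) * (1-p) ^ (b-1) * ((b/2)⁻¹ * (1-p) ^ (-(b/2))) := by
          apply mul_le_mul_of_nonneg_left hlog
          exact mul_nonneg (rpow_nonneg hp0.le _) (rpow_nonneg hp1.le _)
    _ = (b/2)⁻¹ * (p ^ (c-1) * (1-p) ^ (b/2-1)) := by
          rw [show b/2 - 1 = (b-1) + -(b/2) by ring, rpow_add hp1]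
          ring

lemma main_single {α β : ℝ} (hα : 0 < α) (hβ : 0 < β) :
    -∫ p in Icc (0:ℝ) 1, p * betaDensity α β p * Real.log (p * betaDensity α β p)
      = (α / (α + β)) *
          (Real.log (betaB (α + 1) β) - α * digamma (α + 1) - (β - 1) * digamma β
            + (α + β - 1) * digamma (α + β + 1) - Real.log (α / (α + β))) := by
  have hab : (0:ℝ) < α + β := by linarith
  have hB : 0 < betaB α β := by
    unfold betaB
    exact div_pos (mul_pos (Gamma_pos_of_pos hα) (Gamma_pos_of_pos hβ)) (Gamma_pos_of_pos hab)
  have hα1 : (0:ℝ) < α + 1 := by linarith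
  -- closed forms of the three integrals
  have hJ0 := real_betaIntegral hα1 hβ
  have hJ1 := betaInt_log_left hα1 hβ
  have hJ2 := betaInt_log_right hα1 hβ
  simp only [add_sub_cancel_right] at hJ0 hJ1 hJ2
  rw [show α + 1 + β = α + β + 1 by ring] at hJ1 hJ2
  -- integrability of the three pieces
  have hI0 := beta_integrableOn hα1 hβ
  simp only [add_sub_cancel_right] at hI0
  have hIL : IntegrableOn (fun p : ℝ => p ^ α * (1-p) ^ (β-1) * log p) (Ioo 0 1) := by
    have h := beta_log_integrableOn hα1 hβ
    simp only [add_sub_cancel_right] at h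
    apply h.mono' ?_ ?_
    · exact ((by fun_prop : Measurable fun p : ℝ => p ^ α * (1-p) ^ (β-1)).mul
        Real.measurable_log).aestronglyMeasurable
    · filter_upwards [self_mem_ae_restrict measurableSet_Ioo] with p hp
      have hp1 : (0:ℝ) ≤ 1 - p := by linarith [hp.2]
      rw [norm_mul, Real.norm_of_nonneg
        (mul_nonneg (rpow_nonneg hp.1.le _) (rpow_nonneg hp1 _))]
      exact le_of_eq rfl
  have hIR : IntegrableOn (fun p : ℝ => p ^ α * (1-p) ^ (β-1) * log (1-p)) (Ioo 0 1) := by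
    have h := beta_log1_integrableOn hα1 hβ
    simp only [add_sub_cancel_right] at h
    apply h.mono' ?_ ?_
    · exact ((by fun_prop : Measurable fun p : ℝ => p ^ α * (1-p) ^ (β-1)).mul
        (Real.measurable_log.comp (measurable_const.sub measurable_id))).aestronglyMeasurable
    · filter_upwards [self_mem_ae_restrict measurableSet_Ioo] with p hp
      have hp1 : (0:ℝ) ≤ 1 - p := by linarith [hp.2]
      rw [norm_mul, Real.norm_of_nonneg
        (mul_nonneg (rpow_nonneg hp.1.le _) (rpow_nonneg hp1 _))]
      exact le_of_eq rfl
  -- rewrite the integral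
  have key : ∫ p in Icc (0:ℝ) 1, p * betaDensity α β p * Real.log (p * betaDensity α β p)
      = (betaB α β)⁻¹ * (α * (∫ p in Ioo (0:ℝ) 1, p ^ α * (1-p) ^ (β-1) * log p)
          + (β-1) * (∫ p in Ioo (0:ℝ) 1, p ^ α * (1-p) ^ (β-1) * log (1-p))
          - log (betaB α β) * (∫ p in Ioo (0:ℝ) 1, p ^ α * (1-p) ^ (β-1))) := by
    rw [integral_Icc_eq_integral_Ioc, integral_Ioc_eq_integral_Ioo]
    rw [setIntegral_congr_fun measurableSet_Ioo (g := fun p : ℝ =>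
        (betaB α β)⁻¹ * (α * (p ^ α * (1-p) ^ (β-1) * log p)
          + (β-1) * (p ^ α * (1-p) ^ (β-1) * log (1-p))
          - log (betaB α β) * (p ^ α * (1-p) ^ (β-1)))) ?_]
    · have A1 : IntegrableOn (fun p : ℝ => α * (p ^ α * (1-p) ^ (β-1) * log p)) (Ioo 0 1) :=
        hIL.const_mul α
      have A2 : IntegrableOn (fun p : ℝ => (β-1) * (p ^ α * (1-p) ^ (β-1) * log (1-p))) (Ioo 0 1) :=
        hIR.const_mul (β-1)
      have A3 : IntegrableOn (fun p : ℝ => Real.log (betaB α β) * (p ^ α * (1-p) ^ (β-1))) (Ioo 0 1) :=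
        hI0.const_mul _
      have A12 : IntegrableOn (fun p : ℝ => α * (p ^ α * (1-p) ^ (β-1) * log p)
          + (β-1) * (p ^ α * (1-p) ^ (β-1) * log (1-p))) (Ioo 0 1) := A1.add A2
      rw [integral_const_mul, integral_sub A12 A3, integral_add A1 A2,
        integral_const_mul, integral_const_mul, integral_const_mul]
    · intro p hp
      have hp0 : (0:ℝ) < p := hp.1
      have hp1 : (0:ℝ) < 1 - p := by linarith [hp.2]
      have hpow : p ^ (α-1) * p = p ^ α := by
        rw [← rpow_add_one hp0.ne' (α-1)]; norm_num
      have hval : p * betaDensity α β p = p ^ α * (1-p) ^ (β-1) / betaB α β := by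
        unfold betaDensity; rw [← hpow]; ring
      have hlg : Real.log (p * betaDensity α β p)
          = α * log p + (β-1) * log (1-p) - log (betaB α β) := by
        rw [hval, log_div (by positivity) hB.ne', log_mul (by positivity) (by positivity),
          log_rpow hp0, log_rpow hp1]
      dsimp only
      rw [hlg, hval]
      field_simp
  -- beta function recurrence
  have hB' : betaB (α+1) β = (α/(α+β)) * betaB α β := by
    unfold betaB
    rw [Real.Gamma_add_one hα.ne', show α + 1 + β = (α+β) + 1 by ring,
      Real.Gamma_add_one hab.ne']
    field_simp
  have hm : (0:ℝ) < α/(α+β) := by positivity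
  have hlogB : Real.log (betaB α β) = Real.log (betaB (α+1) β) - Real.log (α/(α+β)) := by
    rw [hB', Real.log_mul hm.ne' hB.ne']; ring
  rw [key, hJ0, hJ1, hJ2, hlogB, hB']
  field_simp
  ring

end Aux

/-- Let `C ≥ 1` and `α_i, β_i > 0`, and let
`f_i = f_{α_i,β_i}` be the `Beta(α_i,β_i)` density with mean
`m_i = α_i/(α_i+β_i)`. Then the marginalized joint entropy satisfies
`−∑ i ∫₀¹ p f_i(p) log(p f_i(p)) dp
  = ∑ i m_i·[log B(α_i+1,β_i) − α_i ψ(α_i+1) − (β_i−1)ψ(β_i)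
              + (α_i+β_i−1)ψ(α_i+β_i+1) − log m_i]`. -/
theorem beta_marginalized_joint_entropy
    (C : ℕ) (hC : 1 ≤ C) (α β : Fin C → ℝ)
    (hα : ∀ i, 0 < α i) (hβ : ∀ i, 0 < β i) :
    -∑ i, ∫ p in Set.Icc (0 : ℝ) 1,
        p * betaDensity (α i) (β i) p *
          Real.log (p * betaDensity (α i) (β i) p)
      = ∑ i, (α i / (α i + β i)) *
          (Real.log (betaB (α i + 1) (β i)) - α i * digamma (α i + 1)
            - (β i - 1) * digamma (β i)
            + (α i + β i - 1) * digamma (α i + β i + 1)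
            - Real.log (α i / (α i + β i))) := by
  rw [← Finset.sum_neg_distrib]
  exact Finset.sum_congr rfl fun i _ => main_single (hα i) (hβ i)
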